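/- Let h > 0 and define the 2K-periodic oscillatory mesh h_k = ½ h (3 + (−1)^k), i.e. h_k = h for odd k and h_k = 2h for even k. Then the quadrature coefficients ω̂_k = (h_{k−1} − 2h_k + h_{k+1})/(4h_k) satisfy ω̂_k = 1/2 for odd k and ω̂_k = −1/4 for even k, and moreover Σ_{k=−K+1}^K h_k ω̂_k² = (1/8) Σ_{k=−K+1}^K h_k; i.e. for a constant gradient the relative variational crime on this quasi-uniform but non-smooth mesh is 1/√8, independent of h. -/

import Mathlib

lemma alt_sum_zero (K : ℤ) (hK : 1 ≤ K) :
    (∑ k ∈ Finset.Icc (-K + 1) K, (-1 : ℝ) ^ k) = 0 := by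
  refine Int.le_induction
    (motive := fun K _ => (∑ k ∈ Finset.Icc (-K + 1) K, (-1 : ℝ) ^ k) = 0) ?_ ?_ K hK
  · show (∑ k ∈ Finset.Icc (-1 + 1 : ℤ) 1, (-1 : ℝ) ^ k) = 0
    have e : Finset.Icc (-1 + 1 : ℤ) 1 = {0, 1} := rfl
    rw [e, Finset.sum_insert (by decide), Finset.sum_singleton]
    norm_num
  · intro K hK ih
    have e : Finset.Icc (-(K + 1) + 1) (K + 1)
        = insert (-K) (insert (K + 1) (Finset.Icc (-K + 1) K)) := by
      ext x
      simp only [Finset.mem_Icc, Finset.mem_insert]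
      omega
    rw [e, Finset.sum_insert (by simp only [Finset.mem_insert, Finset.mem_Icc]; omega),
      Finset.sum_insert (by simp only [Finset.mem_Icc]; omega), ih]
    have hneg : (-1 : ℝ) ^ (-K) = (-1 : ℝ) ^ K := by
      rw [zpow_neg, ← inv_zpow, inv_neg, inv_one]
    rw [hneg, zpow_add₀ (by norm_num : (-1 : ℝ) ≠ 0)]
    ring

/-- on the oscillatory mesh `h_k = ½h(3 + (−1)^k)` the quadrature
coefficients are `ω̂_k = ½` for odd `k` and `ω̂_k = −¼` for even `k`, and
`Σ h_k ω̂_k² = ⅛ Σ h_k`. -/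
theorem statement15 (K : ℤ) (hK : 1 ≤ K) (h : ℝ) (hpos : 0 < h)
    (hsz : ℤ → ℝ)
    (hhsz : ∀ k : ℤ, hsz k = (1 / 2) * h * (3 + (-1 : ℝ) ^ k))
    (oh : ℤ → ℝ)
    (hoh : ∀ k : ℤ, oh k = (hsz (k - 1) - 2 * hsz k + hsz (k + 1)) / (4 * hsz k)) :
    (∀ k : ℤ, Odd k → oh k = 1 / 2) ∧
    (∀ k : ℤ, Even k → oh k = -(1 / 4)) ∧
    (∑ k ∈ Finset.Icc (-K + 1) K, hsz k * oh k ^ 2 =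
      (1 / 8) * ∑ k ∈ Finset.Icc (-K + 1) K, hsz k) := by
  have hne : h ≠ 0 := ne_of_gt hpos
  have hsz_odd : ∀ k : ℤ, Odd k → hsz k = h := by
    intro k hk
    rw [hhsz, hk.neg_one_zpow]; ring
  have hsz_even : ∀ k : ℤ, Even k → hsz k = 2 * h := by
    intro k hk
    rw [hhsz, hk.neg_one_zpow]; ring
  have oh_odd : ∀ k : ℤ, Odd k → oh k = 1 / 2 := by
    intro k hk
    rw [hoh, hsz_odd k hk, hsz_even (k - 1) (hk.sub_odd odd_one), hsz_even (k + 1) (hk.add_odd odd_one)]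
    field_simp; ring
  have oh_even : ∀ k : ℤ, Even k → oh k = -(1 / 4) := by
    intro k hk
    rw [hoh, hsz_even k hk, hsz_odd (k - 1) (hk.sub_odd odd_one), hsz_odd (k + 1) (hk.add_one)]
    field_simp; ring
  refine ⟨oh_odd, oh_even, ?_⟩
  have key : ∀ k : ℤ, hsz k * oh k ^ 2
      = (1 / 8) * hsz k + (-(-1 : ℝ) ^ k) * h / 8 := by
    intro k
    rcases Int.even_or_odd k with hk | hk
    · rw [oh_even k hk, hsz_even k hk, hk.neg_one_zpow]; ring
    · rw [oh_odd k hk, hsz_odd k hk, hk.neg_one_zpow]; ring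
  rw [Finset.sum_congr rfl (fun k _ => key k), Finset.sum_add_distrib,
    Finset.mul_sum]
  have : ∑ k ∈ Finset.Icc (-K + 1) K, (-(-1 : ℝ) ^ k) * h / 8
      = -(h / 8) * ∑ k ∈ Finset.Icc (-K + 1) K, (-1 : ℝ) ^ k := by
    rw [Finset.mul_sum]; apply Finset.sum_congr rfl; intro k _; ring
  rw [this, alt_sum_zero K hK, mul_zero, add_zero]
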